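/- arXiv:1106.4721 — 5 statements merged into one kernel-verified Lean document; each statement's English description precedes it below -/
import Mathlib

section
/- Let M and H be measurable groups and let φ : H → Aut(M) be an action of H on M by group automorphisms such that (h, y) ↦ φ_h(y) is measurable. Let G = M ⋊ H be the semidirect product, i.e. the set M × H with multiplication (x,h)·(y,k) = (x · φ_h(y), h·k). Let μ_M and μ_H be σ-finite measures on M and H that are invariant under all right translations of M and H respectively. Then the product measure μ_M ⊗ μ_H on G is invariant under all right translations of G: for every (y,k) ∈ G, the pushforward of μ_M ⊗ μ_H under the map (x,h) ↦ (x,h)·(y,k) = (x · φ_h(y), h·k) equals μ_M ⊗ μ_H. -/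
open MeasureTheory

/-- The product of right-invariant σ-finite measures on measurable groups `M` and `H`
is right-invariant on the semidirect product `M ⋊ H`, whose multiplication is
`(x,h)·(y,k) = (x · φ h y, h·k)` for an action `φ : H →* MulAut M`. -/
theorem semidirect_product_right_invariant
    {M H : Type*} [Group M] [Group H]
    [MeasurableSpace M] [MeasurableSpace H]
    [MeasurableMul₂ M] [MeasurableInv M]
    [MeasurableMul₂ H] [MeasurableInv H]
    (φ : H →* MulAut M)
    (hφ : Measurable fun p : H × M => φ p.1 p.2)
    (μM : Measure M) (μH : Measure H)
    [SigmaFinite μM] [SigmaFinite μH]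
    (hM : ∀ g : M, Measure.map (fun x => x * g) μM = μM)
    (hH : ∀ g : H, Measure.map (fun x => x * g) μH = μH) :
    ∀ y : M, ∀ k : H,
      Measure.map (fun p : M × H => (p.1 * φ p.2 y, p.2 * k)) (μM.prod μH)
        = μM.prod μH := by
  intro y k
  have hfk : MeasurePreserving (fun h : H => h * k) μH μH :=
    ⟨measurable_mul_const k, hH k⟩
  have hS : MeasurePreserving (fun p : H × M => (p.1 * k, p.2 * φ p.1 y))
      (μH.prod μM) (μH.prod μM) :=
    hfk.skew_product (g := fun h x => x * φ h y)
      (measurable_snd.mul (hφ.comp (measurable_fst.prodMk measurable_const)))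
      (Filter.Eventually.of_forall fun h => hM (φ h y))
  have hT : MeasurePreserving (fun p : M × H => (p.1 * φ p.2 y, p.2 * k))
      (μM.prod μH) (μM.prod μH) := by
    have := ((Measure.measurePreserving_swap (μ := μH) (ν := μM)).comp hS).comp (Measure.measurePreserving_swap (μ := μM) (ν := μH))
    convert this using 1
    rfl
  exact hT.map_eq
end

section
/- Let (Ω, F, P) be a probability space equipped with a filtration (F_t)_{t≥0}, and let (τ_j)_{j≥0} be a nondecreasing sequence of stopping times with τ_0 = 0. Fix t₀ > 0 and u > 0. Suppose that for each j ≥ 0, A_j is an event belonging to the σ-algebra F_{τ_j}, that A_j ⊆ {τ_j < t₀}, and that P(τ_{j+1} − τ_j ≥ u | F_{τ_j}) ≥ 1/2 almost everywhere on A_j. Then ∑_{j≥0} P(A_j) ≤ 2(1 + t₀/u). -/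
open MeasureTheory

/-- If `(τ_j)` is a nondecreasing sequence of stopping times with `τ_0 = 0`, and `A_j` are
events in `F_{τ_j}` with `A_j ⊆ {τ_j < t₀}` such that
`P(τ_{j+1} − τ_j ≥ u | F_{τ_j}) ≥ 1/2` a.e. on `A_j`, then `∑_j P(A_j) ≤ 2(1 + t₀/u)`. -/
theorem sum_prob_le_of_cond_gap {Ω : Type*} {m0 : MeasurableSpace Ω}
    (μ : Measure Ω) [IsProbabilityMeasure μ]
    (ℱ : Filtration ℝ m0) (τ : ℕ → Ω → ℝ)
    (hτ : ∀ j, IsStoppingTime ℱ (fun ω => (τ j ω : WithTop ℝ)))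
    (hτ_nonneg : ∀ j ω, 0 ≤ τ j ω)
    (hτ_mono : ∀ j ω, τ j ω ≤ τ (j + 1) ω)
    (hτ0 : ∀ ω, τ 0 ω = 0)
    (t₀ u : ℝ) (ht₀ : 0 < t₀) (hu : 0 < u)
    (A : ℕ → Set Ω)
    (hA_meas : ∀ j, MeasurableSet[(hτ j).measurableSpace] (A j))
    (hA_sub : ∀ j, A j ⊆ {ω | τ j ω < t₀})
    (hcond : ∀ j, ∀ᵐ ω ∂μ, ω ∈ A j →
        (1 / 2 : ℝ) ≤ (μ[Set.indicator {ω' | u ≤ τ (j + 1) ω' - τ j ω'}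
            (fun _ => (1 : ℝ)) | (hτ j).measurableSpace]) ω) :
    (∑' j, μ (A j)) ≤ ENNReal.ofReal (2 * (1 + t₀ / u)) := by
  classical
  -- measurability of τ j w.r.t. m0
  have hτ_meas : ∀ j, Measurable (τ j) := fun j =>
    (((hτ j).measurable).mono (hτ j).measurableSpace_le le_rfl).untopD (0:ℝ)
  set G : ℕ → Set Ω := fun j => {ω' | u ≤ τ (j + 1) ω' - τ j ω'} with hG
  have hG_meas : ∀ j, MeasurableSet (G j) := by
    intro j
    have : Measurable fun ω' => τ (j+1) ω' - τ j ω' := (hτ_meas (j+1)).sub (hτ_meas j)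
    exact measurableSet_le measurable_const this
  have hA_meas0 : ∀ j, MeasurableSet (A j) := fun j =>
    (hτ j).measurableSpace_le _ (hA_meas j)
  set B : ℕ → Set Ω := fun j => A j ∩ G j with hB
  have hB_meas : ∀ j, MeasurableSet (B j) := fun j => (hA_meas0 j).inter (hG_meas j)
  -- Step 1 : μ (A j) ≤ 2 * μ (B j)
  have step1 : ∀ j, μ (A j) ≤ 2 * μ (B j) := by
    intro j
    have hint : Integrable ((G j).indicator (fun _ => (1:ℝ))) μ :=
      (integrable_const (1:ℝ)).indicator (hG_meas j)
    have hset : ∫ ω in A j, ((G j).indicator (fun _ => (1:ℝ))) ω ∂μ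
        = (μ (B j)).toReal := by
      rw [setIntegral_indicator (hG_meas j), setIntegral_const, smul_eq_mul, mul_one]; rfl
    have hce : ∫ ω in A j, (μ[(G j).indicator (fun _ => (1:ℝ)) | (hτ j).measurableSpace]) ω ∂μ
        = ∫ ω in A j, ((G j).indicator (fun _ => (1:ℝ))) ω ∂μ :=
      setIntegral_condExp (hτ j).measurableSpace_le hint (hA_meas j)
    have hmono : (1/2 : ℝ) * (μ (A j)).toReal
        ≤ ∫ ω in A j, (μ[(G j).indicator (fun _ => (1:ℝ)) | (hτ j).measurableSpace]) ω ∂μ := by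
      have h₁ : ∫ ω in A j, (1/2 : ℝ) ∂μ = (μ (A j)).toReal * (1/2) := by
        rw [setIntegral_const, smul_eq_mul]; rfl
      rw [mul_comm, ← h₁]
      refine setIntegral_mono_ae_restrict (integrable_const _).restrict
        integrable_condExp.restrict ?_
      rw [Filter.EventuallyLE, ae_restrict_iff' (hA_meas0 j)]
      exact hcond j
    have hreal : (μ (A j)).toReal ≤ 2 * (μ (B j)).toReal := by
      have := hmono.trans_eq (hce.trans hset)
      linarith
    have h2 : 2 * (μ (B j)).toReal = ((2 : ENNReal) * μ (B j)).toReal := by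
      rw [ENNReal.toReal_mul]; norm_num
    rw [h2] at hreal
    exact (ENNReal.toReal_le_toReal (measure_ne_top _ _)
      (ENNReal.mul_ne_top (by norm_num) (measure_ne_top _ _))).mp hreal
  -- Step 2 : pointwise counting bound
  have count : ∀ ω n, u * (((Finset.range n).filter (fun j => ω ∈ B j)).card : ℝ) ≤ τ n ω := by
    intro ω n
    induction n with
    | zero => simp [hτ0 ω]
    | succ n ih =>
      rw [Finset.range_add_one, Finset.filter_insert]
      by_cases hn : ω ∈ B n
      · rw [if_pos hn, Finset.card_insert_of_notMem (by simp)]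
        push_cast
        have hgap : u ≤ τ (n+1) ω - τ n ω := hn.2
        have := ih
        nlinarith
      · rw [if_neg hn]
        exact ih.trans (hτ_mono n ω)
  have card_bound : ∀ ω n,
      (((Finset.range n).filter (fun j => ω ∈ B j)).card : ℝ) ≤ 1 + t₀ / u := by
    intro ω n
    set F := (Finset.range n).filter (fun j => ω ∈ B j) with hF
    rcases F.eq_empty_or_nonempty with h | h
    · rw [h]; simp; positivity
    · set j₀ := F.max' h with hj₀
      have hj₀F : j₀ ∈ F := F.max'_mem h
      have hj₀B : ω ∈ B j₀ := (Finset.mem_filter.mp hj₀F).2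
      have hj₀n : j₀ < n := Finset.mem_range.mp (Finset.mem_filter.mp hj₀F).1
      have hFsub : F ⊆ (Finset.range (j₀+1)).filter (fun j => ω ∈ B j) := by
        intro k hk
        refine Finset.mem_filter.mpr ⟨Finset.mem_range.mpr ?_, (Finset.mem_filter.mp hk).2⟩
        exact Nat.lt_succ_of_le (F.le_max' k hk)
      have hcard : F.card ≤ ((Finset.range j₀).filter (fun j => ω ∈ B j)).card + 1 := by
        calc F.card ≤ ((Finset.range (j₀+1)).filter (fun j => ω ∈ B j)).card :=
              Finset.card_le_card hFsub
          _ ≤ _ := by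
              rw [Finset.range_add_one, Finset.filter_insert, if_pos hj₀B,
                Finset.card_insert_of_notMem (by simp)]
      have h1 : u * (((Finset.range j₀).filter (fun j => ω ∈ B j)).card : ℝ) ≤ τ j₀ ω :=
        count ω j₀
      have h2 : τ j₀ ω < t₀ := hA_sub j₀ hj₀B.1
      have h3 : (((Finset.range j₀).filter (fun j => ω ∈ B j)).card : ℝ) ≤ t₀ / u := by
        rw [le_div_iff₀ hu]; nlinarith
      calc (F.card : ℝ) ≤ (((Finset.range j₀).filter (fun j => ω ∈ B j)).card : ℝ) + 1 := by
            exact_mod_cast hcard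
        _ ≤ 1 + t₀ / u := by linarith
  -- Step 3 : ∑' μ (B j) ≤ ofReal (1 + t₀/u)
  have step3 : (∑' j, μ (B j)) ≤ ENNReal.ofReal (1 + t₀ / u) := by
    have h1 : (∑' j, μ (B j)) = ∫⁻ ω, ∑' j, (B j).indicator (fun _ => (1:ENNReal)) ω ∂μ := by
      refine Eq.symm ?_
      calc ∫⁻ ω, ∑' j, (B j).indicator (fun _ => (1:ENNReal)) ω ∂μ
          = ∑' j, ∫⁻ ω, (B j).indicator (fun _ => (1:ENNReal)) ω ∂μ :=
            lintegral_tsum (fun j => ((measurable_one).indicator (hB_meas j)).aemeasurable)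
        _ = ∑' j, μ (B j) := tsum_congr fun j => by
            exact lintegral_indicator_one (hB_meas j)
    rw [h1]
    calc ∫⁻ ω, ∑' j, (B j).indicator (fun _ => (1:ENNReal)) ω ∂μ
        ≤ ∫⁻ _, ENNReal.ofReal (1 + t₀ / u) ∂μ := by
          refine lintegral_mono fun ω => ?_
          rw [ENNReal.tsum_eq_iSup_nat]
          refine iSup_le fun n => ?_
          have hsum : ∑ j ∈ Finset.range n, (B j).indicator (fun _ => (1:ENNReal)) ω
              = (((Finset.range n).filter (fun j => ω ∈ B j)).card : ENNReal) := by
            simp only [Set.indicator_apply]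
            rw [Finset.sum_boole]
          rw [hsum]
          have := card_bound ω n
          calc (((Finset.range n).filter (fun j => ω ∈ B j)).card : ENNReal)
              = ENNReal.ofReal (((Finset.range n).filter (fun j => ω ∈ B j)).card : ℝ) := by
                rw [ENNReal.ofReal_natCast]
            _ ≤ ENNReal.ofReal (1 + t₀ / u) := ENNReal.ofReal_le_ofReal this
      _ = ENNReal.ofReal (1 + t₀ / u) := by
          rw [lintegral_const, measure_univ, mul_one]
    -- done
  -- combine
  calc (∑' j, μ (A j)) ≤ ∑' j, 2 * μ (B j) := ENNReal.tsum_le_tsum step1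
    _ = 2 * ∑' j, μ (B j) := ENNReal.tsum_mul_left
    _ ≤ 2 * ENNReal.ofReal (1 + t₀ / u) := by gcongr
    _ = ENNReal.ofReal (2 * (1 + t₀ / u)) := by
        rw [ENNReal.ofReal_mul (by norm_num)]
        norm_num
end

section
/- Let (Ω, F, P) be a probability space equipped with a filtration (F_t)_{t≥0}. Let (τ_k)_{k≥1} and (τ_k′)_{k≥1} be stopping times with τ_k ≤ τ_k′ ≤ τ_{k+1} for every k ≥ 1. Fix t > 0 and let E be an event such that {τ_k ≤ t < τ_k′} ⊆ E for every k ≥ 1. Assume that for each k ≥ 1, P(τ_k′ > t | F_{τ_k}) ≥ 1/2 almost everywhere on the event {τ_k ≤ t}. Then ∑_{k≥1} P(τ_k ≤ t) ≤ 2 P(E). -/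
open MeasureTheory

/-- If `(τ_k)` and `(τ_k′)` are stopping times with `τ_k ≤ τ_k′ ≤ τ_{k+1}`, `E` is an event
containing each `{τ_k ≤ t < τ_k′}`, and `P(τ_k′ > t | F_{τ_k}) ≥ 1/2` a.e. on `{τ_k ≤ t}`,
then `∑_k P(τ_k ≤ t) ≤ 2 P(E)`. -/
theorem sum_prob_entrance_le {Ω : Type*} {m0 : MeasurableSpace Ω}
    (μ : Measure Ω) [IsProbabilityMeasure μ]
    (ℱ : Filtration ℝ m0) (τ τ' : ℕ → Ω → ℝ)
    (hτ : ∀ k, IsStoppingTime ℱ (fun ω => (τ k ω : WithTop ℝ)))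
    (hτ' : ∀ k, IsStoppingTime ℱ (fun ω => (τ' k ω : WithTop ℝ)))
    (horder : ∀ k ω, τ k ω ≤ τ' k ω)
    (hchain : ∀ k ω, τ' k ω ≤ τ (k + 1) ω)
    (t : ℝ) (ht : 0 < t)
    (E : Set Ω) (hE_meas : MeasurableSet E)
    (hE : ∀ k, {ω | τ k ω ≤ t ∧ t < τ' k ω} ⊆ E)
    (hcond : ∀ k, ∀ᵐ ω ∂μ, τ k ω ≤ t →
        (1 / 2 : ℝ) ≤ (μ[Set.indicator {ω' | t < τ' k ω'}
            (fun _ => (1 : ℝ)) | (hτ k).measurableSpace]) ω) :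
    (∑' k, μ {ω | τ k ω ≤ t}) ≤ 2 * μ E := by
  set A : ℕ → Set Ω := fun k => {ω | τ k ω ≤ t ∧ t < τ' k ω} with hA
  -- monotonicity of τ
  have hτmono : ∀ j k, j ≤ k → ∀ ω, τ j ω ≤ τ k ω := by
    intro j k hjk ω
    induction k with
    | zero => simp_all
    | succ n ih =>
      rcases Nat.lt_succ_iff_lt_or_eq.mp (Nat.lt_succ_of_le hjk) with h | h
      · exact (ih (Nat.lt_succ_iff.mp h)).trans ((horder n ω).trans (hchain n ω))
      · simp [h]
  -- measurability of pieces
  have hSmeas : ∀ k, MeasurableSet {ω | τ k ω ≤ t} :=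
    fun k => by simpa using ℱ.le t _ ((hτ k).measurableSet_le t)
  have hTmeas : ∀ k, MeasurableSet {ω | t < τ' k ω} := by
    intro k
    have : {ω | t < τ' k ω} = {ω | τ' k ω ≤ t}ᶜ := by
      ext ω; simp [not_le]
    rw [this]
    simpa using (ℱ.le t _ ((hτ' k).measurableSet_le t)).compl
  have hAmeas : ∀ k, MeasurableSet (A k) := fun k => (hSmeas k).inter (hTmeas k)
  -- key per-k estimate
  have key : ∀ k, μ {ω | τ k ω ≤ t} ≤ 2 * μ (A k) := by
    intro k
    set S := {ω | τ k ω ≤ t} with hS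
    have hSτ : MeasurableSet[(hτ k).measurableSpace] S := by
      rw [hS]; simpa using (hτ k).measurableSet_le' t
    have hm : (hτ k).measurableSpace ≤ m0 := (hτ k).measurableSpace_le
    set f : Ω → ℝ := Set.indicator {ω' | t < τ' k ω'} (fun _ => (1 : ℝ)) with hf
    have hf_int : Integrable f μ := (integrable_const (1 : ℝ)).indicator (hTmeas k)
    have h1 : ∫ ω in S, (μ[f | (hτ k).measurableSpace]) ω ∂μ = ∫ ω in S, f ω ∂μ :=
      setIntegral_condExp hm hf_int hSτ
    have h2 : ∫ ω in S, f ω ∂μ = (μ (A k)).toReal := by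
      rw [hf, setIntegral_indicator (hTmeas k)]
      have : S ∩ {ω' | t < τ' k ω'} = A k := by
        ext ω; simp [hS, hA, Set.mem_setOf_eq]
      rw [this, setIntegral_const, smul_eq_mul, mul_one]; rfl
    have h3 : (1 / 2 : ℝ) * (μ S).toReal ≤ ∫ ω in S, (μ[f | (hτ k).measurableSpace]) ω ∂μ := by
      have hb : ∀ᵐ ω ∂(μ.restrict S), (1 / 2 : ℝ) ≤ (μ[f | (hτ k).measurableSpace]) ω := by
        rw [ae_restrict_iff' (hSmeas k)]
        exact hcond k
      calc (1 / 2 : ℝ) * (μ S).toReal = ∫ _ω in S, (1 / 2 : ℝ) ∂μ := by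
            rw [setIntegral_const, smul_eq_mul, mul_comm]; rfl
        _ ≤ _ := by
            refine setIntegral_mono_ae_restrict (integrable_const _).restrict
              integrable_condExp.restrict hb
    have h4 : (μ S).toReal ≤ 2 * (μ (A k)).toReal := by nlinarith [h1, h2, h3]
    have hfin : 2 * μ (A k) ≠ ⊤ := by
      finiteness
    rw [← ENNReal.toReal_le_toReal (measure_ne_top μ S) hfin]
    rw [ENNReal.toReal_mul]
    simpa using h4
  -- disjointness
  have hdisj : Pairwise (Function.onFun Disjoint A) := by
    intro j k hjk
    wlog h : j < k generalizing j k
    · exact (this hjk.symm (hjk.lt_or_gt.resolve_left h)).symm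
    refine Set.disjoint_left.mpr ?_
    rintro ω ⟨hj1, hj2⟩ ⟨hk1, _⟩
    have : t < τ k ω := lt_of_lt_of_le hj2 ((hchain j ω).trans (hτmono (j + 1) k h ω))
    exact absurd hk1 (not_le.mpr this)
  have hsum : (∑' k, μ (A k)) = μ (⋃ k, A k) := (measure_iUnion hdisj hAmeas).symm
  have hUE : μ (⋃ k, A k) ≤ μ E := measure_mono (Set.iUnion_subset hE)
  calc (∑' k, μ {ω | τ k ω ≤ t}) ≤ ∑' k, 2 * μ (A k) := ENNReal.tsum_le_tsum key
    _ = 2 * ∑' k, μ (A k) := ENNReal.tsum_mul_left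
    _ ≤ 2 * μ E := by rw [hsum]; exact mul_le_mul_right hUE 2
end

section
/- For every real q with 0 < q ≤ 1 and every β ≥ 0: 2 ∫₀¹ (1−s) (1 + s(q−1))^{−β} ds ≥ q² (q(2−q))^{−β}, and moreover q² (q(2−q))^{−β} ≥ 2^{−β} q^{2−β}. In particular, for integers n ≥ 1 and reals α > 0, d > 0, taking q = e^{−nα} and β = d/α gives 2 ∫₀¹ (1−s)(1 + s(e^{−nα}−1))^{−d/α} ds ≥ 2^{−d/α} e^{n(d−2α)}. -/
open scoped Real

open intervalIntegral in
private lemma part1 (q β : ℝ) (hq : 0 < q) (hq1 : q ≤ 1) (hβ : 0 ≤ β) :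
    q ^ 2 * (q * (2 - q)) ^ (-β)
      ≤ 2 * ∫ s in (0:ℝ)..1, (1 - s) * (1 + s * (q - 1)) ^ (-β) := by
  set c : ℝ := (q * (2 - q)) ^ (-β) with hc
  have hbase : ∀ s : ℝ, s ≤ 1 → 0 < 1 + s * (q - 1) := by
    intro s hs
    have : s * (q - 1) ≥ 1 * (q - 1) := by nlinarith
    nlinarith
  have hcontf : ContinuousOn (fun s : ℝ => (1 - s) * (1 + s * (q - 1)) ^ (-β))
      (Set.Icc (0:ℝ) 1) := by
    apply ContinuousOn.mul (by fun_prop)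
    apply ContinuousOn.rpow_const (by fun_prop)
    intro s hs
    exact Or.inl (ne_of_gt (hbase s hs.2))
  have hint1 : IntervalIntegrable (fun s : ℝ => (1 - s) * (1 + s * (q - 1)) ^ (-β))
      MeasureTheory.volume 0 (1 - q) := by
    apply ContinuousOn.intervalIntegrable
    apply hcontf.mono
    rw [Set.uIcc_of_le (by linarith)]
    intro x hx; exact ⟨hx.1, by linarith [hx.2]⟩
  have hint2 : IntervalIntegrable (fun s : ℝ => (1 - s) * (1 + s * (q - 1)) ^ (-β))
      MeasureTheory.volume (1 - q) 1 := by
    apply ContinuousOn.intervalIntegrable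
    apply hcontf.mono
    rw [Set.uIcc_of_le (by linarith)]
    intro x hx; exact ⟨by linarith [hx.1], hx.2⟩
  have hintg : IntervalIntegrable (fun s : ℝ => c * (1 - s))
      MeasureTheory.volume (1 - q) 1 :=
    (Continuous.intervalIntegrable (by continuity) _ _)
  have hsplit : (∫ s in (0:ℝ)..1, (1 - s) * (1 + s * (q - 1)) ^ (-β))
      = (∫ s in (0:ℝ)..(1 - q), (1 - s) * (1 + s * (q - 1)) ^ (-β))
        + ∫ s in (1 - q : ℝ)..1, (1 - s) * (1 + s * (q - 1)) ^ (-β) :=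
    (intervalIntegral.integral_add_adjacent_intervals hint1 hint2).symm
  have hnn : (0:ℝ) ≤ ∫ s in (0:ℝ)..(1 - q), (1 - s) * (1 + s * (q - 1)) ^ (-β) := by
    apply intervalIntegral.integral_nonneg (by linarith)
    intro s hs
    have hs1 : s ≤ 1 := by linarith [hs.2]
    exact mul_nonneg (by linarith) (Real.rpow_nonneg (hbase s hs1).le _)
  have hmono : (∫ s in (1 - q : ℝ)..1, c * (1 - s))
      ≤ ∫ s in (1 - q : ℝ)..1, (1 - s) * (1 + s * (q - 1)) ^ (-β) := by
    apply intervalIntegral.integral_mono_on (by linarith) hintg hint2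
    intro s hs
    rw [mul_comm]
    apply mul_le_mul_of_nonneg_left _ (by linarith [hs.2])
    apply Real.rpow_le_rpow_of_nonpos (hbase s hs.2) _ (by linarith)
    nlinarith [hs.1]
  have hval : (∫ s in (1 - q : ℝ)..1, c * (1 - s)) = c * (q ^ 2 / 2) := by
    rw [intervalIntegral.integral_const_mul]
    have : (∫ s in (1 - q : ℝ)..1, (1 - s))
        = (∫ s in (1 - q : ℝ)..1, (1:ℝ)) - ∫ s in (1 - q : ℝ)..1, s :=
      intervalIntegral.integral_sub intervalIntegrable_const intervalIntegrable_id
    rw [this, integral_id, integral_one]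
    ring
  have hcnn : 0 ≤ c := Real.rpow_nonneg (by nlinarith) _
  nlinarith [hmono, hval ▸ hmono]

private lemma part2 (q β : ℝ) (hq : 0 < q) (hq1 : q ≤ 1) (hβ : 0 ≤ β) :
    (2:ℝ) ^ (-β) * q ^ (2 - β) ≤ q ^ 2 * (q * (2 - q)) ^ (-β) := by
  have h1 : (q * (2 - q)) ^ (-β) ≥ (2 * q) ^ (-β) := by
    apply Real.rpow_le_rpow_of_nonpos (by nlinarith) (by nlinarith) (by linarith)
  have h2 : (2 * q : ℝ) ^ (-β) = 2 ^ (-β) * q ^ (-β) :=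
    Real.mul_rpow (by norm_num) hq.le
  have h3 : q ^ (2 - β) = q ^ 2 * q ^ (-β) := by
    rw [show (2 - β : ℝ) = 2 + (-β) by ring, Real.rpow_add hq, Real.rpow_two]
  rw [h3]
  calc (2:ℝ) ^ (-β) * (q ^ 2 * q ^ (-β)) = q ^ 2 * ((2 * q) ^ (-β)) := by rw [h2]; ring
    _ ≤ q ^ 2 * (q * (2 - q)) ^ (-β) := by
        apply mul_le_mul_of_nonneg_left h1 (by positivity)

/-- Quantitative lower bounds for the density contribution of the event `A_n` in the
counterexample on the group `ℝ^d ⋊ ℤ`: for `0 < q ≤ 1` and `β ≥ 0`,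
`2∫₀¹(1−s)(1+s(q−1))^{−β} ds ≥ q²(q(2−q))^{−β} ≥ 2^{−β} q^{2−β}`; taking `q = e^{−nα}`
and `β = d/α` gives the lower bound `2^{−d/α} e^{n(d−2α)}`. -/
theorem counterexample_density_lower_bound :
    (∀ q β : ℝ, 0 < q → q ≤ 1 → 0 ≤ β →
      q ^ 2 * (q * (2 - q)) ^ (-β)
        ≤ 2 * ∫ s in (0:ℝ)..1, (1 - s) * (1 + s * (q - 1)) ^ (-β)) ∧
    (∀ q β : ℝ, 0 < q → q ≤ 1 → 0 ≤ β →
      (2:ℝ) ^ (-β) * q ^ (2 - β) ≤ q ^ 2 * (q * (2 - q)) ^ (-β)) ∧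
    (∀ (n : ℕ) (α d : ℝ), 1 ≤ n → 0 < α → 0 < d →
      (2:ℝ) ^ (-(d / α)) * Real.exp (n * (d - 2 * α))
        ≤ 2 * ∫ s in (0:ℝ)..1,
            (1 - s) * (1 + s * (Real.exp (-(n * α)) - 1)) ^ (-(d / α))) := by
  refine ⟨part1, part2, ?_⟩
  intro n α d hn hα hd
  set q : ℝ := Real.exp (-(n * α)) with hqdef
  set β : ℝ := d / α with hβdef
  have hnpos : (1:ℝ) ≤ (n:ℝ) := by exact_mod_cast hn
  have hq : 0 < q := Real.exp_pos _
  have hq1 : q ≤ 1 := Real.exp_le_one_iff.mpr (by nlinarith)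
  have hβ : 0 ≤ β := le_of_lt (div_pos hd hα)
  have key : (2:ℝ) ^ (-β) * Real.exp (n * (d - 2 * α)) ≤ (2:ℝ) ^ (-β) * q ^ (2 - β) := by
    have : q ^ (2 - β) = Real.exp (n * (d - 2 * α)) := by
      rw [hqdef, ← Real.exp_mul]
      congr 1
      field_simp [hβdef]
      rw [hβdef]
      field_simp
      ring
    rw [this]
  exact le_trans (le_trans key (part2 q β hq hq1 hβ)) (part1 q β hq hq1 hβ)
end

section
/- For every α > 0 there exists a constant c > 0 (one may take c = 2·4^{−α−1}) such that for all real y with 1 < y ≤ 4/3: ∫₀¹ (y − u)^{−α−1} (1 − u)^{α/2} du ≥ c (y − 1)^{−α/2}. -/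
/-- For every `α > 0` there is `c > 0` (one may take `c = 2·4^{−α−1}`) such that for all
`1 < y ≤ 4/3`: `∫₀¹ (y−u)^{−α−1}(1−u)^{α/2} du ≥ c (y−1)^{−α/2}`. -/
theorem killed_process_exit_density_lower_bound (α : ℝ) (hα : 0 < α) :
    ∃ c : ℝ, 0 < c ∧ ∀ y : ℝ, 1 < y → y ≤ 4 / 3 →
      c * (y - 1) ^ (-(α / 2))
        ≤ ∫ u in (0:ℝ)..1, (y - u) ^ (-α - 1) * (1 - u) ^ (α / 2) := by
  refine ⟨2 ^ (-α - 1) / (α / 2 + 1), by positivity, ?_⟩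
  intro y hy1 hy2
  have hy0 : (0:ℝ) < y - 1 := by linarith
  set f : ℝ → ℝ := fun u => (y - u) ^ (-α - 1) * (1 - u) ^ (α / 2) with hf
  have hcont : ContinuousOn f (Set.Icc 0 1) := by
    apply ContinuousOn.mul
    · apply ContinuousOn.rpow_const (by fun_prop)
      intro x hx
      left
      have := hx.2
      simp only [Set.mem_Icc] at hx
      nlinarith [hx.2]
    · apply ContinuousOn.rpow_const (by fun_prop)
      intro x hx
      right
      positivity
  have h2y0 : (0:ℝ) ≤ 2 - y := by linarith
  have h2y1 : 2 - y ≤ 1 := by linarith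
  have hInt : IntervalIntegrable f MeasureTheory.volume 0 1 := by
    apply ContinuousOn.intervalIntegrable
    rwa [Set.uIcc_of_le (by norm_num : (0:ℝ) ≤ 1)]
  have hInt1 : IntervalIntegrable f MeasureTheory.volume 0 (2 - y) :=
    hInt.mono_set (by
      rw [Set.uIcc_of_le h2y0, Set.uIcc_of_le (by norm_num : (0:ℝ) ≤ 1)]
      exact Set.Icc_subset_Icc le_rfl h2y1)
  have hInt2 : IntervalIntegrable f MeasureTheory.volume (2 - y) 1 :=
    hInt.mono_set (by
      rw [Set.uIcc_of_le h2y1, Set.uIcc_of_le (by norm_num : (0:ℝ) ≤ 1)]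
      exact Set.Icc_subset_Icc h2y0 le_rfl)
  have hsplit : ∫ u in (0:ℝ)..1, f u = (∫ u in (0:ℝ)..(2 - y), f u) + ∫ u in (2 - y)..1, f u :=
    (intervalIntegral.integral_add_adjacent_intervals hInt1 hInt2).symm
  have h1 : 0 ≤ ∫ u in (0:ℝ)..(2 - y), f u := by
    apply intervalIntegral.integral_nonneg h2y0
    intro u hu
    exact mul_nonneg (Real.rpow_nonneg (by linarith [hu.2]) _)
      (Real.rpow_nonneg (by linarith [hu.2]) _)
  -- lower bound on second piece
  set g : ℝ → ℝ := fun u => (2 * (y - 1)) ^ (-α - 1) * (1 - u) ^ (α / 2) with hg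
  have hgInt : IntervalIntegrable g MeasureTheory.volume (2 - y) 1 := by
    apply ContinuousOn.intervalIntegrable
    apply ContinuousOn.mul continuousOn_const
    apply ContinuousOn.rpow_const (by fun_prop)
    intro x hx; right; positivity
  have hmono : ∫ u in (2 - y)..1, g u ≤ ∫ u in (2 - y)..1, f u := by
    apply intervalIntegral.integral_mono_on h2y1 hgInt hInt2
    intro u hu
    have hub : y - u ≤ 2 * (y - 1) := by have := hu.1; linarith
    have hlb : (0:ℝ) < y - u := by have := hu.2; linarith
    have : (y - u) ^ (-α - 1) ≥ (2 * (y - 1)) ^ (-α - 1) :=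
      Real.rpow_le_rpow_of_nonpos hlb hub (by linarith)
    have hnn : (0:ℝ) ≤ (1 - u) ^ (α / 2) :=
      Real.rpow_nonneg (by linarith [hu.2]) _
    exact mul_le_mul_of_nonneg_right this hnn
  -- compute ∫ g
  have hcalc : ∫ u in (2 - y)..1, (1 - u) ^ (α / 2)
      = (y - 1) ^ (α / 2 + 1) / (α / 2 + 1) := by
    have h := intervalIntegral.integral_comp_sub_left (a := 2 - y) (b := 1)
      (fun t => t ^ (α / 2)) 1
    try simp only at h
    rw [h]
    norm_num
    rw [integral_rpow (Or.inl (by linarith))]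
    rw [Real.zero_rpow (by positivity : α / 2 + 1 ≠ 0),
      show 1 - (2 - y) = y - 1 by ring]
    ring
  have hgval : ∫ u in (2 - y)..1, g u
      = (2 * (y - 1)) ^ (-α - 1) * ((y - 1) ^ (α / 2 + 1) / (α / 2 + 1)) := by
    rw [hg]
    rw [intervalIntegral.integral_const_mul, hcalc]
  have hkey : 2 ^ (-α - 1) / (α / 2 + 1) * (y - 1) ^ (-(α / 2))
      = (2 * (y - 1)) ^ (-α - 1) * ((y - 1) ^ (α / 2 + 1) / (α / 2 + 1)) := by
    have hcomb : (y - 1) ^ (-α - 1) * (y - 1) ^ (α / 2 + 1) = (y - 1) ^ (-(α / 2)) := by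
      rw [← Real.rpow_add hy0]; ring_nf
    rw [Real.mul_rpow (by norm_num) hy0.le, mul_assoc,
      div_eq_mul_inv ((y - 1) ^ (α / 2 + 1)), ← mul_assoc ((y - 1) ^ (-α - 1)), hcomb]
    ring
  calc 2 ^ (-α - 1) / (α / 2 + 1) * (y - 1) ^ (-(α / 2))
      = ∫ u in (2 - y)..1, g u := by rw [hkey, hgval]
    _ ≤ ∫ u in (2 - y)..1, f u := hmono
    _ ≤ ∫ u in (0:ℝ)..1, f u := by rw [hsplit]; linarith
end
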